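/- Let n, p, s be positive integers with s ≤ np, and let Γ be a real np×np matrix of rank np − s. Then the set of real (ns)×(n²p) matrices C_S such that the stacked matrix [(I_n ⊗ Γ); C_S] (of size (n²p + ns) × n²p) does not have full column rank n²p has Lebesgue measure zero in the space of (ns)×(n²p) real matrices. Consequently, for every C_S outside this null set and every right-hand side for which the system (I_n ⊗ Γ)x = g, C_S x = 0 has a solution, that solution is unique. -/

import Mathlib

open Matrix MeasureTheory
open scoped Kronecker

open MvPolynomial

lemma mv_null_fin : ∀ (m : ℕ) (P : MvPolynomial (Fin m) ℝ), P ≠ 0 →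
    volume {x : Fin m → ℝ | eval x P = 0} = 0 := by
  intro m
  induction m with
  | zero =>
    intro P hP
    obtain ⟨a, rfl⟩ := MvPolynomial.C_surjective (Fin 0) P
    have ha : a ≠ 0 := fun h => hP (by simp [h])
    have h0 : {x : Fin 0 → ℝ | eval x (C a) = 0} = ∅ := by
      ext x; simp [ha]
    rw [h0, measure_empty]
  | succ m ih =>
    intro P hP
    set Q := finSuccEquiv ℝ m P with hQ
    have hQ0 : Q ≠ 0 := by
      simp [hQ, AddEquivClass.map_ne_zero_iff, hP]
    obtain ⟨k, hk⟩ : ∃ k, Q.coeff k ≠ 0 := by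
      by_contra h
      push_neg at h
      exact hQ0 (Polynomial.ext fun k => by simp [h k])
    -- the bad set for the remaining coordinates
    have hN : volume {y : Fin m → ℝ | eval y (Q.coeff k) = 0} = 0 := ih _ hk
    set T : Set ((Fin m → ℝ) × ℝ) := {q | eval (Fin.cons q.2 q.1) P = 0} with hT
    have hcons : Measurable fun q : (Fin m → ℝ) × ℝ => (Fin.cons q.2 q.1 : Fin (m+1) → ℝ) := by
      apply measurable_pi_lambda
      intro i
      refine Fin.cases ?_ ?_ i
      · simpa using (measurable_snd : Measurable fun q : (Fin m → ℝ) × ℝ => q.2)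
      · intro j
        simp; exact (measurable_pi_apply j).comp
          (measurable_fst : Measurable fun q : (Fin m → ℝ) × ℝ => q.1)
    have hfm : Measurable fun q : (Fin m → ℝ) × ℝ => eval (Fin.cons q.2 q.1) P :=
      (MvPolynomial.continuous_eval (p := P)).measurable.comp hcons
    have hTm : MeasurableSet T := hfm (measurableSet_singleton 0)
    have hTnull : (volume : Measure ((Fin m → ℝ) × ℝ)) T = 0 := by
      rw [show (volume : Measure ((Fin m → ℝ) × ℝ)) =
        (volume : Measure (Fin m → ℝ)).prod (volume : Measure ℝ) from rfl]
      rw [Measure.measure_prod_null hTm]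
      have hsub : ∀ y : Fin m → ℝ, eval y (Q.coeff k) ≠ 0 →
          volume (Prod.mk y ⁻¹' T) = 0 := by
        intro y hy
        have hpy : Polynomial.map (eval y) Q ≠ 0 := by
          intro h
          apply hy
          have := congrArg (fun q => Polynomial.coeff q k) h
          simpa [Polynomial.coeff_map] using this
        have : Prod.mk y ⁻¹' T ⊆ {a : ℝ | Polynomial.IsRoot (Polynomial.map (eval y) Q) a} := by
          intro a ha
          simp only [Set.mem_preimage, hT, Set.mem_setOf_eq] at ha
          rw [eval_eq_eval_mv_eval'] at ha
          exact ha
        exact measure_mono_null this ((Polynomial.finite_setOf_isRoot hpy).measure_zero _)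
      have : ∀ᵐ y : Fin m → ℝ, eval y (Q.coeff k) ≠ 0 := by
        rw [ae_iff]
        simpa using hN
      filter_upwards [this] with y hy using hsub y hy
    -- transfer along the measurable equivalence
    set e := MeasurableEquiv.piFinSuccAbove (fun _ : Fin (m + 1) => ℝ) 0 with he
    have hS : {x : Fin (m+1) → ℝ | eval x P = 0} = e ⁻¹' (Prod.swap ⁻¹' T) := by
      ext x
      obtain ⟨⟨a, y⟩, rfl⟩ := e.symm.surjective x
      have h1 : e.symm (a, y) = Fin.cons a y := by
        simp [he, MeasurableEquiv.piFinSuccAbove_symm_apply, Fin.insertNth_zero, Fin.consEquiv]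
      have h2 : e (Fin.cons a y) = (a, y) := by rw [← h1]; exact e.apply_symm_apply _
      simp only [h1, Set.mem_preimage, h2, Prod.swap_prod_mk, Set.mem_setOf_eq, hT]
    rw [hS]
    have hmp := (volume_preserving_piFinSuccAbove (fun _ : Fin (m + 1) => ℝ) 0)
    rw [hmp.measure_preimage ((hTm.preimage measurable_swap).nullMeasurableSet)]
    rw [show (volume : Measure (ℝ × (Fin m → ℝ))) = (volume : Measure ℝ).prod volume from rfl,
      Measure.measurePreserving_swap.measure_preimage hTm.nullMeasurableSet]
    exact hTnull

lemma mv_null {ι : Type*} [Fintype ι] (P : MvPolynomial ι ℝ) (hP : P ≠ 0) :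
    volume {x : ι → ℝ | eval x P = 0} = 0 := by
  classical
  set d := Fintype.card ι with hd
  set f : ι ≃ Fin d := Fintype.equivFin ι with hf
  set P' : MvPolynomial (Fin d) ℝ := rename f P with hP'
  have hP'0 : P' ≠ 0 := by
    intro h
    exact hP ((MvPolynomial.rename_injective _ f.injective) (by simpa [hP'] using h))
  have hZ : MeasurableSet {z : Fin d → ℝ | eval z P' = 0} :=
    (isClosed_eq (MvPolynomial.continuous_eval _) continuous_const).measurableSet
  set e := MeasurableEquiv.piCongrLeft (fun _ : Fin d => ℝ) f with he
  have hmp : MeasurePreserving e volume volume :=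
    volume_measurePreserving_piCongrLeft (fun _ : Fin d => ℝ) f
  have hpre : {x : ι → ℝ | eval x P = 0} = e ⁻¹' {z : Fin d → ℝ | eval z P' = 0} := by
    ext x
    have h1 : e x = x ∘ f.symm := by
      ext j
      simp [he, MeasurableEquiv.piCongrLeft, Equiv.piCongrLeft, Equiv.piCongrLeft']
    simp only [Set.mem_preimage, Set.mem_setOf_eq, h1, hP', eval_rename]
    have h2 : (x ∘ f.symm) ∘ f = x := by ext i; simp
    rw [h2]
  rw [hpre, hmp.measure_preimage hZ.nullMeasurableSet]
  exact mv_null_fin d P' hP'0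

lemma uncurry_mp (a b : Type*) [Fintype a] [Fintype b] :
    MeasurePreserving (fun (C : a → b → ℝ) (q : a × b) => C q.1 q.2) volume volume := by
  classical
  have hmeas : Measurable (fun (C : a → b → ℝ) (q : a × b) => C q.1 q.2) :=
    measurable_pi_lambda _ fun q => (measurable_pi_apply q.2).comp (measurable_pi_apply q.1)
  refine ⟨hmeas, ?_⟩
  refine (Measure.pi_eq fun s hs => ?_).symm
  rw [Measure.map_apply hmeas (MeasurableSet.univ_pi hs)]
  have hpre : (fun (C : a → b → ℝ) (q : a × b) => C q.1 q.2) ⁻¹' Set.univ.pi s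
      = Set.univ.pi fun i => Set.univ.pi fun j => s (i, j) := by
    ext C
    simp only [Set.mem_preimage, Set.mem_pi, Set.mem_univ, forall_true_left]
    exact ⟨fun h i j => h (i, j), fun h q => h q.1 q.2⟩
  rw [hpre, volume_pi_pi]
  simp_rw [volume_pi_pi]
  exact (Fintype.prod_prod_type (f := fun q : a × b => volume (s q))).symm

private lemma sum_smul_dot {ι m : Type} [Fintype ι] [Fintype m]
    (c : ι → ℝ) (f : ι → m → ℝ) (v : m → ℝ) :
    (∑ i, c i • f i) ⬝ᵥ v = ∑ i, c i * (f i ⬝ᵥ v) := by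
  simp only [dotProduct, Finset.sum_apply, Pi.smul_apply, smul_eq_mul,
    Finset.sum_mul, Finset.mul_sum]
  rw [Finset.sum_comm]
  exact Finset.sum_congr rfl fun i _ => Finset.sum_congr rfl fun j _ => by ring

lemma exists_good_C (n p s : ℕ) (hsnp : s ≤ n * p)
    (Γ : Matrix (Fin (n * p)) (Fin (n * p)) ℝ) (hΓ : Γ.rank = n * p - s) :
    ∃ C₀ : Fin (n * s) → (Fin n × Fin (n * p)) → ℝ,
      ∀ v, (Matrix.fromRows ((1 : Matrix (Fin n) (Fin n) ℝ) ⊗ₖ Γ) (Matrix.of C₀)).mulVec v = 0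
        → v = 0 := by
  classical
  set M : Matrix (Fin n × Fin (n * p)) (Fin n × Fin (n * p)) ℝ :=
    (1 : Matrix (Fin n) (Fin n) ℝ) ⊗ₖ Γ with hM
  have hMv : ∀ (x : Fin n × Fin (n * p) → ℝ) (i : Fin n) (j : Fin (n * p)),
      M.mulVec x (i, j) = Γ.mulVec (fun l => x (i, l)) j := by
    intro x i j
    simp only [hM, Matrix.mulVec, dotProduct, Fintype.sum_prod_type,
      Matrix.kroneckerMap_apply, Matrix.one_apply]
    rw [Finset.sum_eq_single i]
    · simp
    · intro k _ hk
      simp [Ne.symm hk]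
    · simp
  set K := LinearMap.ker M.mulVecLin with hK
  set K₀ := LinearMap.ker Γ.mulVecLin with hK₀
  have hK₀rank : Module.finrank ℝ K₀ = s := by
    have h := LinearMap.finrank_range_add_finrank_ker Γ.mulVecLin
    rw [Module.finrank_fintype_fun_eq_card] at h
    simp only [Fintype.card_fin] at h
    have h2 : Module.finrank ℝ (LinearMap.range Γ.mulVecLin) = n * p - s := by
      rw [← hΓ]; rfl
    rw [hK₀]
    omega
  have hmem : ∀ x ∈ K, ∀ i : Fin n, (fun l => x (i, l)) ∈ K₀ := by
    intro x hx i
    simp only [hK, LinearMap.mem_ker, Matrix.mulVecLin_apply] at hx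
    simp only [hK₀, LinearMap.mem_ker, Matrix.mulVecLin_apply]
    funext j
    rw [← hMv x i j, hx]
    rfl
  set ψ : K →ₗ[ℝ] (Fin n → K₀) :=
    { toFun := fun v i => ⟨fun l => (v : Fin n × Fin (n * p) → ℝ) (i, l), hmem v.1 v.2 i⟩
      map_add' := fun v w => rfl
      map_smul' := fun c v => rfl } with hψ
  have hψinj : Function.Injective ψ := by
    intro v w hvw
    ext ⟨i, l⟩
    exact congrArg (fun u : K₀ => (u : Fin (n * p) → ℝ) l) (congrFun hvw i)
  have hKrank : Module.finrank ℝ K ≤ n * s := by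
    have := LinearMap.finrank_le_finrank_of_injective hψinj
    rwa [Module.finrank_pi_fintype, Finset.sum_const, Finset.card_univ, Fintype.card_fin,
      hK₀rank, smul_eq_mul] at this
  set d := Module.finrank ℝ K with hd
  set b := Module.finBasis ℝ K with hb
  set C₀ : Fin (n * s) → (Fin n × Fin (n * p)) → ℝ :=
    fun i => if h : (i : ℕ) < d then ((b ⟨i, h⟩ : K) : Fin n × Fin (n * p) → ℝ) else 0
    with hC₀
  refine ⟨C₀, ?_⟩
  intro v hv
  rw [Matrix.fromRows_mulVec] at hv
  have hMv0 : M.mulVec v = 0 := funext fun j => congrFun hv (Sum.inl j)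
  have hCv0 : ∀ i : Fin (n * s), C₀ i ⬝ᵥ v = 0 := fun i => congrFun hv (Sum.inr i)
  have hvK : v ∈ K := by
    simp only [hK, LinearMap.mem_ker, Matrix.mulVecLin_apply]; exact hMv0
  have hdot : ∀ idx : Fin d, ((b idx : K) : Fin n × Fin (n * p) → ℝ) ⬝ᵥ v = 0 := by
    intro idx
    have hi : (idx : ℕ) < n * s := lt_of_lt_of_le idx.2 hKrank
    have h1 := hCv0 ⟨idx, hi⟩
    rw [hC₀] at h1
    simp only at h1
    rw [dif_pos (show ((⟨(idx : ℕ), hi⟩ : Fin (n * s)) : ℕ) < d from idx.2)] at h1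
    convert h1 using 3
  have hv' : v = ∑ idx : Fin d,
      (b.repr ⟨v, hvK⟩) idx • ((b idx : K) : Fin n × Fin (n * p) → ℝ) := by
    have h1 := b.sum_repr ⟨v, hvK⟩
    have h2 := congrArg (Subtype.val) h1
    rw [Submodule.coe_sum] at h2
    simp only [SetLike.val_smul] at h2
    exact h2.symm
  have hvv : v ⬝ᵥ v = 0 := by
    nth_rewrite 1 [hv']
    rw [sum_smul_dot]
    simp [hdot]
  exact dotProduct_self_eq_zero.mp hvv

-- full column rank iff trivial kernel
lemma rank_eq_card_iff_ker {r β : Type} [Fintype r] [Fintype β] [DecidableEq β]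
    (B : Matrix r β ℝ) :
    B.rank = Fintype.card β ↔ ∀ v, B.mulVec v = 0 → v = 0 := by
  have h := LinearMap.finrank_range_add_finrank_ker B.mulVecLin
  rw [Module.finrank_fintype_fun_eq_card] at h
  have hker : (∀ v, B.mulVec v = 0 → v = 0) ↔ LinearMap.ker B.mulVecLin = ⊥ := by
    rw [Submodule.eq_bot_iff]
    simp only [LinearMap.mem_ker, Matrix.mulVecLin_apply]
  rw [hker]
  have hr : B.rank = Module.finrank ℝ (LinearMap.range B.mulVecLin) := rfl
  constructor
  · intro hrank
    have : Module.finrank ℝ (LinearMap.ker B.mulVecLin) = 0 := by omega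
    exact Submodule.finrank_eq_zero.mp this
  · intro hbot
    rw [hbot] at h
    simpa [hr] using h.trans (by simp)

lemma det_gram_ne_zero_iff {r β : Type} [Fintype r] [Fintype β] [DecidableEq β]
    (B : Matrix r β ℝ) :
    (Bᵀ * B).det ≠ 0 ↔ ∀ v, B.mulVec v = 0 → v = 0 := by
  rw [Ne, ← Matrix.exists_mulVec_eq_zero_iff]
  have hker : ∀ v, (Bᵀ * B).mulVec v = 0 ↔ B.mulVec v = 0 := by
    intro v
    have := Matrix.ker_mulVecLin_transpose_mul_self B
    have h1 := Submodule.ext_iff.mp this v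
    simpa only [LinearMap.mem_ker, Matrix.mulVecLin_apply] using h1
  constructor
  · intro h v hv
    by_contra hv0
    exact h ⟨v, hv0, (hker v).mpr hv⟩
  · rintro h ⟨v, hv0, hv⟩
    exact hv0 (h v ((hker v).mp hv))

/-- For `Γ` of size `np×np` and rank `np − s`, the set of
`(ns)×(n²p)` restriction matrices `C_S` (identified with Euclidean space with
Lebesgue measure) for which the stacked matrix `[(I_n ⊗ Γ); C_S]` fails to have
full column rank `n²p` is a Lebesgue null set; for every `C_S` outside it, the
system `(I_n ⊗ Γ)x = g, C_S x = 0` has at most one solution. -/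
theorem stmt_11 (n p s : ℕ) (hn : 0 < n) (hp : 0 < p) (hs : 0 < s)
    (hsnp : s ≤ n * p)
    (Γ : Matrix (Fin (n * p)) (Fin (n * p)) ℝ) (hΓ : Γ.rank = n * p - s) :
    volume {C : Fin (n * s) → (Fin n × Fin (n * p)) → ℝ |
      (Matrix.fromRows ((1 : Matrix (Fin n) (Fin n) ℝ) ⊗ₖ Γ) (Matrix.of C)).rank
        ≠ n ^ 2 * p} = 0 ∧
    ∀ C : Fin (n * s) → (Fin n × Fin (n * p)) → ℝ,
      (Matrix.fromRows ((1 : Matrix (Fin n) (Fin n) ℝ) ⊗ₖ Γ) (Matrix.of C)).rank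
        = n ^ 2 * p →
      ∀ (g x y : (Fin n × Fin (n * p)) → ℝ),
        ((1 : Matrix (Fin n) (Fin n) ℝ) ⊗ₖ Γ).mulVec x = g →
        (Matrix.of C).mulVec x = 0 →
        ((1 : Matrix (Fin n) (Fin n) ℝ) ⊗ₖ Γ).mulVec y = g →
        (Matrix.of C).mulVec y = 0 →
        x = y := by
  classical
  set M : Matrix (Fin n × Fin (n * p)) (Fin n × Fin (n * p)) ℝ :=
    (1 : Matrix (Fin n) (Fin n) ℝ) ⊗ₖ Γ with hM
  have hcard : Fintype.card (Fin n × Fin (n * p)) = n ^ 2 * p := by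
    simp [Fintype.card_prod]; ring
  -- the key rank criterion
  have hrank_iff : ∀ C : Fin (n * s) → (Fin n × Fin (n * p)) → ℝ,
      (Matrix.fromRows M (Matrix.of C)).rank = n ^ 2 * p ↔
        ∀ v, (Matrix.fromRows M (Matrix.of C)).mulVec v = 0 → v = 0 := by
    intro C
    rw [← hcard]
    exact rank_eq_card_iff_ker _
  constructor
  · -- measure-zero part
    -- the generic determinant polynomial
    set ι : Type := Fin (n * s) × (Fin n × Fin (n * p)) with hι
    set B : Matrix ((Fin n × Fin (n * p)) ⊕ Fin (n * s)) (Fin n × Fin (n * p))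
        (MvPolynomial ι ℝ) :=
      Matrix.fromRows (M.map MvPolynomial.C)
        (Matrix.of fun i j => (X (i, j) : MvPolynomial ι ℝ)) with hB
    set P : MvPolynomial ι ℝ := (Bᵀ * B).det with hP
    have hmap : ∀ C : Fin (n * s) → (Fin n × Fin (n * p)) → ℝ,
        B.map (eval fun q : ι => C q.1 q.2) = Matrix.fromRows M (Matrix.of C) := by
      intro C
      ext i j
      cases i with
      | inl i => simp [hB, Matrix.map_apply]
      | inr i => simp [hB, Matrix.map_apply]
    have heval : ∀ C : Fin (n * s) → (Fin n × Fin (n * p)) → ℝ,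
        eval (fun q : ι => C q.1 q.2) P =
          ((Matrix.fromRows M (Matrix.of C))ᵀ * Matrix.fromRows M (Matrix.of C)).det := by
      intro C
      rw [hP, RingHom.map_det]
      congr 1
      rw [RingHom.mapMatrix_apply,
        Matrix.map_mul (f := (eval fun q : ι => C q.1 q.2 : MvPolynomial ι ℝ →+* ℝ)),
        Matrix.transpose_map, hmap]
    have hP0 : P ≠ 0 := by
      obtain ⟨C₀, hC₀⟩ := exists_good_C n p s hsnp Γ hΓ
      intro h
      have := heval C₀
      rw [h] at this
      simp only [map_zero] at this
      exact (det_gram_ne_zero_iff _).mpr hC₀ this.symm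
    have hsub : {C : Fin (n * s) → (Fin n × Fin (n * p)) → ℝ |
        (Matrix.fromRows M (Matrix.of C)).rank ≠ n ^ 2 * p} ⊆
        (fun (C : Fin (n * s) → (Fin n × Fin (n * p)) → ℝ) (q : ι) => C q.1 q.2) ⁻¹'
          {z : ι → ℝ | eval z P = 0} := by
      intro C hC
      simp only [Set.mem_setOf_eq] at hC
      simp only [Set.mem_preimage, Set.mem_setOf_eq, heval C]
      by_contra hdet
      exact hC ((hrank_iff C).mpr ((det_gram_ne_zero_iff _).mp hdet))
    refine measure_mono_null hsub ?_
    have hZ : MeasurableSet {z : ι → ℝ | eval z P = 0} :=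
      (isClosed_eq (MvPolynomial.continuous_eval _) continuous_const).measurableSet
    rw [(uncurry_mp (Fin (n * s)) (Fin n × Fin (n * p))).measure_preimage hZ.nullMeasurableSet]
    exact mv_null P hP0
  · -- uniqueness part
    intro C hC g x y hx1 hx2 hy1 hy2
    have hker := (hrank_iff C).mp hC
    have h0 : (Matrix.fromRows M (Matrix.of C)).mulVec (x - y) = 0 := by
      rw [Matrix.fromRows_mulVec]
      funext i
      cases i with
      | inl i =>
        simp only [Sum.elim_inl, Matrix.mulVec_sub, hx1, hy1, Pi.sub_apply, sub_self,
          Pi.zero_apply]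
      | inr i =>
        simp only [Sum.elim_inr, Matrix.mulVec_sub, hx2, hy2, Pi.sub_apply, sub_self,
          Pi.zero_apply]
    have := hker _ h0
    exact sub_eq_zero.mp this
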